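/- For all β ∈ ℂ and all u, v ∈ L²(ℂ) with z u, z v ∈ L²(ℂ): P_σ(R_β u, R_β v) = P_σ(u,v) - (β conj(Q_σ(u,v)) + β̄ Q_σ(u,v)) + |β|²(M(u) + σM(v)). -/

import Mathlib

open MeasureTheory Complex

noncomputable section

/-- Magnetic translation R_β. -/
def Rmag (β : ℂ) (u : ℂ → ℂ) (z : ℂ) : ℂ :=
  u (z + β) * Complex.exp (((starRingEnd ℂ) z * β - z * (starRingEnd ℂ) β) / 2)

/-- The mass M(u) = ∫ |u|². -/
def Mass (u : ℂ → ℂ) : ℝ := ∫ z : ℂ, ‖u z‖ ^ 2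

/-- The magnetic momentum Q_σ(u,v) = ∫ z(|u|² + σ|v|²). -/
def Qmom (σ : ℝ) (u v : ℂ → ℂ) : ℂ :=
  ∫ z : ℂ, z * (((‖u z‖ ^ 2 + σ * ‖v z‖ ^ 2 : ℝ)) : ℂ)

/-- The angular momentum P_σ(u,v) = ∫ (|z|²-1)(|u|² + σ|v|²). -/
def Pmom (σ : ℝ) (u v : ℂ → ℂ) : ℝ :=
  ∫ z : ℂ, (‖z‖ ^ 2 - 1) * (‖u z‖ ^ 2 + σ * ‖v z‖ ^ 2)

lemma norm_Rmag (β : ℂ) (u : ℂ → ℂ) (z : ℂ) : ‖Rmag β u z‖ = ‖u (z + β)‖ := by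
  have hre : ((((starRingEnd ℂ) z * β - z * (starRingEnd ℂ) β) / 2)).re = 0 := by
    simp [Complex.div_re, Complex.sub_re, Complex.mul_re, Complex.conj_re, Complex.conj_im]
    try ring
  rw [Rmag, norm_mul, Complex.norm_exp, hre,
    Real.exp_zero, mul_one]

lemma int_sq {w : ℂ → ℂ} (hw : MemLp w 2 volume) :
    Integrable (fun z : ℂ => ‖w z‖ ^ 2) volume :=
  (memLp_two_iff_integrable_sq_norm hw.aestronglyMeasurable).mp hw

lemma int_zsq {w : ℂ → ℂ} (hzw : MemLp (fun z : ℂ => z * w z) 2 volume) :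
    Integrable (fun z : ℂ => ‖z‖ ^ 2 * ‖w z‖ ^ 2) volume := by
  simpa [norm_mul, mul_pow] using int_sq hzw

lemma int_zn {w : ℂ → ℂ} (hw : MemLp w 2 volume)
    (hzw : MemLp (fun z : ℂ => z * w z) 2 volume) :
    Integrable (fun z : ℂ => ‖z‖ * ‖w z‖ ^ 2) volume := by
  refine ((int_zsq hzw).add (int_sq hw)).mono' ?_ ?_
  · exact (aestronglyMeasurable_id.norm.mul (hw.aestronglyMeasurable.norm.pow 2))
  · filter_upwards with z
    have h1 : (0:ℝ) ≤ ‖z‖ * ‖w z‖ ^ 2 := by positivity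
    rw [Real.norm_of_nonneg h1]
    show ‖z‖ * ‖w z‖ ^ 2 ≤ ‖z‖ ^ 2 * ‖w z‖ ^ 2 + ‖w z‖ ^ 2
    nlinarith [sq_nonneg (‖z‖ * ‖w z‖ - ‖w z‖), h1]

lemma int_phi_g {σ : ℝ} (hσ : σ = 1 ∨ σ = -1) {u v : ℂ → ℂ}
    (hu : MemLp u 2 volume) (hv : MemLp v 2 volume)
    (hzu : MemLp (fun z : ℂ => z * u z) 2 volume)
    (hzv : MemLp (fun z : ℂ => z * v z) 2 volume)
    {φ : ℂ → ℂ} (hφm : AEStronglyMeasurable φ volume) (hφ : ∀ z, ‖φ z‖ ≤ ‖z‖) :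
    Integrable (fun z : ℂ => φ z * ((‖u z‖ ^ 2 + σ * ‖v z‖ ^ 2 : ℝ) : ℂ)) volume := by
  refine ((int_zn hu hzu).add (int_zn hv hzv)).mono' ?_ ?_
  · exact hφm.mul (Complex.continuous_ofReal.comp_aestronglyMeasurable
      ((hu.aestronglyMeasurable.norm.pow 2).add
        (aestronglyMeasurable_const.mul (hv.aestronglyMeasurable.norm.pow 2))))
  · filter_upwards with z
    have habs : |‖u z‖ ^ 2 + σ * ‖v z‖ ^ 2| ≤ ‖u z‖ ^ 2 + ‖v z‖ ^ 2 := by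
      rcases hσ with h | h <;> subst h <;> rw [abs_le] <;>
        exact ⟨by nlinarith [sq_nonneg ‖u z‖, sq_nonneg ‖v z‖],
               by nlinarith [sq_nonneg ‖u z‖, sq_nonneg ‖v z‖]⟩
    show ‖φ z * ((‖u z‖ ^ 2 + σ * ‖v z‖ ^ 2 : ℝ) : ℂ)‖ ≤
      ‖z‖ * ‖u z‖ ^ 2 + ‖z‖ * ‖v z‖ ^ 2
    rw [norm_mul, Complex.norm_real, Real.norm_eq_abs]
    calc ‖φ z‖ * |‖u z‖ ^ 2 + σ * ‖v z‖ ^ 2|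
        ≤ ‖z‖ * (‖u z‖ ^ 2 + ‖v z‖ ^ 2) :=
          mul_le_mul (hφ z) habs (abs_nonneg _) (norm_nonneg z)
      _ = ‖z‖ * ‖u z‖ ^ 2 + ‖z‖ * ‖v z‖ ^ 2 := by ring

def gfun (σ : ℝ) (u v : ℂ → ℂ) (z : ℂ) : ℝ := ‖u z‖ ^ 2 + σ * ‖v z‖ ^ 2

/-- P_σ(R_β u, R_β v) = P_σ(u,v) - (β Q̄_σ + β̄ Q_σ) + |β|²(M(u) + σM(v)). -/
theorem stmt11 (σ : ℝ) (hσ : σ = 1 ∨ σ = -1) (β : ℂ) (u v : ℂ → ℂ)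
    (hu : MemLp u 2 volume) (hv : MemLp v 2 volume)
    (hzu : MemLp (fun z : ℂ => z * u z) 2 volume)
    (hzv : MemLp (fun z : ℂ => z * v z) 2 volume) :
    ((Pmom σ (Rmag β u) (Rmag β v) : ℝ) : ℂ)
      = ((Pmom σ u v : ℝ) : ℂ)
        - (β * (starRingEnd ℂ) (Qmom σ u v) + (starRingEnd ℂ) β * Qmom σ u v)
        + ((‖β‖ ^ 2 : ℝ) : ℂ) * ((Mass u + σ * Mass v : ℝ) : ℂ) := by
  have hgi : Integrable (gfun σ u v) volume := (int_sq hu).add ((int_sq hv).const_mul σ)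
  have hg1 : Integrable (fun z : ℂ => (‖z‖ ^ 2 - 1) * gfun σ u v z) volume := by
    have h := ((int_zsq hzu).add ((int_zsq hzv).const_mul σ)).sub hgi
    refine h.congr (Filter.Eventually.of_forall fun z => ?_)
    simp only [Pi.add_apply, Pi.sub_apply, gfun]; ring
  have hg2 : Integrable (fun z : ℂ => z * ((gfun σ u v z : ℝ) : ℂ)) volume :=
    int_phi_g hσ hu hv hzu hzv aestronglyMeasurable_id (fun z => le_refl _)
  have hg2' : Integrable (fun z : ℂ => (starRingEnd ℂ) z * ((gfun σ u v z : ℝ) : ℂ)) volume :=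
    int_phi_g hσ hu hv hzu hzv (RCLike.continuous_conj.aestronglyMeasurable)
      (fun z => by rw [RCLike.norm_conj])
  have key : ∀ z : ℂ,
      β * ((starRingEnd ℂ) z * ((gfun σ u v z : ℝ) : ℂ))
        + (starRingEnd ℂ) β * (z * ((gfun σ u v z : ℝ) : ℂ))
      = (((2 * (β * (starRingEnd ℂ) z).re) * gfun σ u v z : ℝ) : ℂ) := by
    intro z
    calc β * ((starRingEnd ℂ) z * ((gfun σ u v z : ℝ) : ℂ))
          + (starRingEnd ℂ) β * (z * ((gfun σ u v z : ℝ) : ℂ))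
        = (β * (starRingEnd ℂ) z + (starRingEnd ℂ) (β * (starRingEnd ℂ) z))
            * ((gfun σ u v z : ℝ) : ℂ) := by
          rw [map_mul, Complex.conj_conj]; ring
      _ = (((2 * (β * (starRingEnd ℂ) z).re) * gfun σ u v z : ℝ) : ℂ) := by
          rw [Complex.add_conj]; push_cast; ring
  have hsum : Integrable (fun z : ℂ =>
      β * ((starRingEnd ℂ) z * ((gfun σ u v z : ℝ) : ℂ))
        + (starRingEnd ℂ) β * (z * ((gfun σ u v z : ℝ) : ℂ))) volume :=
    (hg2'.const_mul β).add (hg2.const_mul _)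
  have hg3 : Integrable (fun z : ℂ => 2 * (β * (starRingEnd ℂ) z).re * gfun σ u v z) volume := by
    refine hsum.re.congr (Filter.Eventually.of_forall fun z => ?_)
    simp only [key]
    simp
  have hQ : β * (starRingEnd ℂ) (Qmom σ u v) + (starRingEnd ℂ) β * Qmom σ u v
      = (((∫ z : ℂ, 2 * (β * (starRingEnd ℂ) z).re * gfun σ u v z) : ℝ) : ℂ) := by
    have hQdef : Qmom σ u v = ∫ z : ℂ, z * ((gfun σ u v z : ℝ) : ℂ) := rfl
    rw [hQdef, ← integral_conj]
    simp only [map_mul, Complex.conj_ofReal]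
    rw [← integral_const_mul β, ← integral_const_mul ((starRingEnd ℂ) β),
      ← integral_add (hg2'.const_mul β) (hg2.const_mul _)]
    rw [integral_congr_ae (Filter.Eventually.of_forall fun z => key z)]
    simpa using Complex.ofRealCLM.integral_comp_comm hg3
  have hM : (∫ z : ℂ, gfun σ u v z) = Mass u + σ * Mass v := by
    rw [show (fun z : ℂ => gfun σ u v z) = fun z : ℂ => ‖u z‖ ^ 2 + σ * ‖v z‖ ^ 2 from rfl,
      integral_add (int_sq hu) ((int_sq hv).const_mul σ), integral_const_mul]
    rfl
  have hP : Pmom σ (Rmag β u) (Rmag β v)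
      = Pmom σ u v - (∫ z : ℂ, 2 * (β * (starRingEnd ℂ) z).re * gfun σ u v z)
        + ‖β‖ ^ 2 * ∫ z : ℂ, gfun σ u v z := by
    have h1 : Pmom σ (Rmag β u) (Rmag β v)
        = ∫ z : ℂ, (fun w : ℂ => (‖w - β‖ ^ 2 - 1) * gfun σ u v w) (z + β) := by
      rw [Pmom]
      refine integral_congr_ae (Filter.Eventually.of_forall fun z => ?_)
      simp only [norm_Rmag, add_sub_cancel_right, gfun]
    rw [h1, integral_add_right_eq_self (fun w : ℂ => (‖w - β‖ ^ 2 - 1) * gfun σ u v w) β]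
    have hsplit : ∀ w : ℂ, (‖w - β‖ ^ 2 - 1) * gfun σ u v w
        = ((‖w‖ ^ 2 - 1) * gfun σ u v w - 2 * (β * (starRingEnd ℂ) w).re * gfun σ u v w)
          + ‖β‖ ^ 2 * gfun σ u v w := by
      intro w
      have hn : ‖w - β‖ ^ 2 = ‖w‖ ^ 2 - 2 * (β * (starRingEnd ℂ) w).re + ‖β‖ ^ 2 := by
        simp only [Complex.sq_norm, Complex.normSq_sub,
          Complex.normSq_apply, Complex.mul_re, Complex.conj_re, Complex.conj_im,
          Complex.sub_re, Complex.sub_im]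
        ring
      rw [hn]; ring
    simp only [hsplit]
    have hg13 : Integrable (fun z : ℂ => (‖z‖ ^ 2 - 1) * gfun σ u v z
        - 2 * (β * (starRingEnd ℂ) z).re * gfun σ u v z) volume := hg1.sub hg3
    rw [integral_add hg13 (hgi.const_mul _), integral_sub hg1 hg3, integral_const_mul]
    rfl
  rw [hP, hQ, ← hM]
  push_cast
  ring
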